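/- Let G be a d-regular finite simple graph on n vertices with d ≥ 2 that contains at least one Hamiltonian cycle. Form G_ω by listing the edges of G in a uniformly random order and taking the shortest initial segment in which every vertex has degree at least 2. Then the expected fraction of the Hamiltonian cycles of G that are contained in G_ω equals 2/binom(n+d−2, n) − 1/binom(n+2d−4, n). -/

import Mathlib

open Finset

/-- The degree of a vertex `v` in the graph whose edge set is the finite set `s`
of edges (elements of `Sym2 V`). -/
def degIn {V : Type*} [DecidableEq V] (s : Finset (Sym2 V)) (v : V) : ℕ :=
  (s.filter (fun e => v ∈ e)).card

/-- Given an ordering `ω` of a finite set `s` of edges, the set consisting of the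
first `i` edges `e_{ω(1)}, …, e_{ω(i)}`. -/
def prefixEdges {V : Type*} [DecidableEq V] {s : Finset (Sym2 V)}
    (ω : Fin s.card ≃ {e : Sym2 V // e ∈ s}) (i : ℕ) : Finset (Sym2 V) :=
  (Finset.univ.filter (fun j : Fin s.card => (j : ℕ) < i)).image (fun j => (ω j : Sym2 V))

/-- `k(ω)`: the least `i` such that every vertex has degree at least `δ` in the graph
formed by the first `i` edges of the ordering `ω`. -/
noncomputable def stopIndex {V : Type*} [Fintype V] [DecidableEq V] (δ : ℕ)
    {s : Finset (Sym2 V)} (ω : Fin s.card ≃ {e : Sym2 V // e ∈ s}) : ℕ :=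
  sInf {i | ∀ v : V, δ ≤ degIn (prefixEdges ω i) v}

/-- The edge set of `G_ω`, i.e. the first `k(ω)` edges of the ordering `ω`. -/
noncomputable def finalEdges {V : Type*} [Fintype V] [DecidableEq V] (δ : ℕ)
    {s : Finset (Sym2 V)} (ω : Fin s.card ≃ {e : Sym2 V // e ∈ s}) : Finset (Sym2 V) :=
  prefixEdges ω (stopIndex δ ω)

/-- A graph is `δ`-regular: every vertex has exactly `δ` neighbours. -/
def regOfDegree {V : Type*} (J : SimpleGraph V) (δ : ℕ) : Prop :=
  ∀ v : V, (J.neighborSet v).ncard = δ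


section Counting
open scoped Classical
variable {α : Type*} [DecidableEq α] {s : Finset α}

/-- positions occupied by elements of `U`. -/
noncomputable def posSet (U : Finset α) (ω : Fin s.card ≃ {x // x ∈ s}) : Finset (Fin s.card) :=
  Finset.univ.filter (fun j => (ω j : α) ∈ U)

lemma card_posSet (U : Finset α) (hU : U ⊆ s) (ω : Fin s.card ≃ {x // x ∈ s}) :
    (posSet U ω).card = U.card := by
  apply Finset.card_bij (fun j _ => (ω j : α))
  · intro j hj; simpa [posSet] using hj
  · intro j hj j' hj' h
    exact ω.injective (Subtype.ext h)
  · intro x hx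
    refine ⟨ω.symm ⟨x, hU hx⟩, ?_, by simp⟩
    simp [posSet, hx]

/-- the pattern of `ω` on `U` : position `i` among `U`-positions ↦ the element there. -/
noncomputable def pat (U : Finset α) (hU : U ⊆ s) (ω : Fin s.card ≃ {x // x ∈ s}) :
    Fin U.card ≃ {x // x ∈ U} := by
  refine Equiv.ofBijective
    (fun i => ⟨(ω ((posSet U ω).orderIsoOfFin (card_posSet U hU ω) i) : α), ?_⟩) ?_
  · have h := ((posSet U ω).orderIsoOfFin (card_posSet U hU ω) i).2
    simp only [posSet, Finset.mem_filter] at h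
    exact h.2
  · rw [Fintype.bijective_iff_injective_and_card]
    constructor
    · intro i j hij
      have : (ω ((posSet U ω).orderIsoOfFin (card_posSet U hU ω) i) : α)
          = (ω ((posSet U ω).orderIsoOfFin (card_posSet U hU ω) j) : α) := by
        simpa using congrArg Subtype.val hij
      have h2 := ω.injective (Subtype.ext this)
      have h3 := ((posSet U ω).orderIsoOfFin (card_posSet U hU ω)).injective (Subtype.ext h2)
      exact h3
    · simp [Fintype.card_coe]

lemma pat_apply_val (U : Finset α) (hU : U ⊆ s) (ω : Fin s.card ≃ {x // x ∈ s}) (i : Fin U.card) :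
    (pat U hU ω i : α) = (ω ((posSet U ω).orderIsoOfFin (card_posSet U hU ω) i) : α) := rfl

lemma pat_symm_lt_iff (U : Finset α) (hU : U ⊆ s) (ω : Fin s.card ≃ {x // x ∈ s})
    (x y : {x // x ∈ U}) :
    (pat U hU ω).symm x < (pat U hU ω).symm y ↔
      ((ω.symm ⟨x, hU x.2⟩ : ℕ) < (ω.symm ⟨y, hU y.2⟩ : ℕ)) := by
  set σ := pat U hU ω
  have key : ∀ z : {x // x ∈ U},
      (ω.symm ⟨(z : α), hU z.2⟩ : Fin s.card)
        = ((posSet U ω).orderIsoOfFin (card_posSet U hU ω) (σ.symm z) : Fin s.card) := by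
    intro z
    have hz : σ (σ.symm z) = z := σ.apply_symm_apply z
    have hv : (z : α) = (ω ((posSet U ω).orderIsoOfFin (card_posSet U hU ω) (σ.symm z)) : α) :=
      (congrArg Subtype.val hz).symm
    have : (⟨(z : α), hU z.2⟩ : {x // x ∈ s})
        = ω ((posSet U ω).orderIsoOfFin (card_posSet U hU ω) (σ.symm z)) := Subtype.ext hv
    rw [this, Equiv.symm_apply_apply]
  rw [show ((ω.symm ⟨(x : α), hU x.2⟩ : ℕ) < (ω.symm ⟨(y : α), hU y.2⟩ : ℕ)) ↔
      ((ω.symm ⟨(x : α), hU x.2⟩ : Fin s.card) < ω.symm ⟨(y : α), hU y.2⟩) from Iff.rfl]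
  rw [key x, key y, Subtype.coe_lt_coe, OrderIso.lt_iff_lt]

end Counting

section Counting2
open scoped Classical
variable {α : Type*} [DecidableEq α] {s : Finset α}

def subEquiv (U : Finset α) (hUs : U ⊆ s) :
    {x // x ∈ U} ≃ {y : {x // x ∈ s} // (y : α) ∈ U} :=
  ⟨fun x => ⟨⟨(x : α), hUs x.2⟩, x.2⟩, fun y => ⟨((y : {x // x ∈ s}) : α), y.2⟩,
    fun x => rfl, fun y => rfl⟩

/-- embed a permutation of `U ⊆ s` into a permutation of `s`. -/
def extPerm (U : Finset α) (hUs : U ⊆ s) (u : Equiv.Perm {x // x ∈ U}) :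
    Equiv.Perm {x // x ∈ s} :=
  u.extendDomain (subEquiv U hUs)

lemma extPerm_apply_mem (U : Finset α) (hUs : U ⊆ s) (u : Equiv.Perm {x // x ∈ U})
    (y : {x // x ∈ s}) (h : (y : α) ∈ U) :
    ((extPerm U hUs u) y : α) = (u ⟨(y : α), h⟩ : α) := by
  rw [extPerm, Equiv.Perm.extendDomain_apply_subtype
    (p := fun y : {x // x ∈ s} => (y : α) ∈ U) u (subEquiv U hUs) h]
  rfl

lemma extPerm_apply_not_mem (U : Finset α) (hUs : U ⊆ s) (u : Equiv.Perm {x // x ∈ U})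
    (y : {x // x ∈ s}) (h : (y : α) ∉ U) :
    (extPerm U hUs u) y = y := by
  rw [extPerm, Equiv.Perm.extendDomain_apply_not_subtype
    (p := fun y : {x // x ∈ s} => (y : α) ∈ U) u (subEquiv U hUs) h]

lemma extPerm_mem_iff (U : Finset α) (hUs : U ⊆ s) (u : Equiv.Perm {x // x ∈ U})
    (y : {x // x ∈ s}) : ((extPerm U hUs u) y : α) ∈ U ↔ (y : α) ∈ U := by
  constructor
  · intro h; by_contra hy
    rw [extPerm_apply_not_mem U hUs u y hy] at h; exact hy h
  · intro h; rw [extPerm_apply_mem U hUs u y h]; exact (u ⟨(y : α), h⟩).2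

lemma extPerm_trans (U : Finset α) (hUs : U ⊆ s) (u u' : Equiv.Perm {x // x ∈ U}) :
    (extPerm U hUs u).trans (extPerm U hUs u') = extPerm U hUs (u.trans u') := by
  unfold extPerm; exact Equiv.Perm.extendDomain_trans _ _ _

lemma extPerm_refl (U : Finset α) (hUs : U ⊆ s) :
    extPerm U hUs (Equiv.refl _) = Equiv.refl _ := by
  apply Equiv.ext
  intro y
  by_cases h : (y : α) ∈ U
  · have := extPerm_apply_mem U hUs (Equiv.refl _) y h
    simp only [Equiv.refl_apply] at this ⊢
    exact Subtype.ext this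
  · simpa using extPerm_apply_not_mem U hUs (Equiv.refl _) y h

lemma posSet_trans (U : Finset α) (hUs : U ⊆ s) (u : Equiv.Perm {x // x ∈ U})
    (ω : Fin s.card ≃ {x // x ∈ s}) :
    posSet U (ω.trans (extPerm U hUs u)) = posSet U ω := by
  ext j
  simp only [posSet, Finset.mem_filter, Finset.mem_univ, true_and]
  exact extPerm_mem_iff U hUs u (ω j)

lemma orderIsoOfFin_congr {β : Type*} [LinearOrder β] {T T' : Finset β} (h : T = T')
    {k : ℕ} (hT : T.card = k) (hT' : T'.card = k) (i : Fin k) :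
    ((T.orderIsoOfFin hT i : β)) = (T'.orderIsoOfFin hT' i : β) := by subst h; rfl

lemma pat_trans (U : Finset α) (hUs : U ⊆ s) (u : Equiv.Perm {x // x ∈ U})
    (ω : Fin s.card ≃ {x // x ∈ s}) :
    pat U hUs (ω.trans (extPerm U hUs u)) = (pat U hUs ω).trans u := by
  apply Equiv.ext
  intro i
  apply Subtype.ext
  rw [Equiv.trans_apply]
  rw [pat_apply_val]
  set ω' := ω.trans (extPerm U hUs u) with hω'
  have hT : posSet U ω' = posSet U ω := posSet_trans U hUs u ω
  have hcongr : ((posSet U ω').orderIsoOfFin (card_posSet U hUs ω') i : Fin s.card)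
      = ((posSet U ω).orderIsoOfFin (card_posSet U hUs ω) i : Fin s.card) :=
    orderIsoOfFin_congr hT _ _ i
  have hmem : (ω ((posSet U ω).orderIsoOfFin (card_posSet U hUs ω) i) : α) ∈ U := by
    have h := ((posSet U ω).orderIsoOfFin (card_posSet U hUs ω) i).2
    simp only [posSet, Finset.mem_filter] at h
    exact h.2
  calc (ω' ((posSet U ω').orderIsoOfFin (card_posSet U hUs ω') i) : α)
      = (ω' ((posSet U ω).orderIsoOfFin (card_posSet U hUs ω) i) : α) := by rw [hcongr]
    _ = ((extPerm U hUs u) (ω ((posSet U ω).orderIsoOfFin (card_posSet U hUs ω) i)) : α) := rfl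
    _ = (u ⟨_, hmem⟩ : α) := extPerm_apply_mem U hUs u _ hmem
    _ = (u (pat U hUs ω i) : α) := by
        have h5 : (⟨_, hmem⟩ : {x // x ∈ U}) = pat U hUs ω i :=
          Subtype.ext (pat_apply_val U hUs ω i).symm
        rw [h5]

lemma fiber_card_eq (U : Finset α) (hUs : U ⊆ s)
    (σ τ : Fin U.card ≃ {x // x ∈ U}) :
    (Finset.univ.filter fun ω : Fin s.card ≃ {x // x ∈ s} => pat U hUs ω = σ).card
    = (Finset.univ.filter fun ω : Fin s.card ≃ {x // x ∈ s} => pat U hUs ω = τ).card := by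
  refine Finset.card_bij' (fun ω _ => ω.trans (extPerm U hUs (σ.symm.trans τ)))
    (fun ω _ => ω.trans (extPerm U hUs (τ.symm.trans σ))) ?hi ?hj ?li ?ri
  case hi =>
    intro ω hω
    simp only [Finset.mem_filter, Finset.mem_univ, true_and] at hω ⊢
    rw [pat_trans, hω]
    ext x
    simp
  case hj =>
    intro ω hω
    simp only [Finset.mem_filter, Finset.mem_univ, true_and] at hω ⊢
    rw [pat_trans, hω]
    ext x
    simp
  case li =>
    intro ω hω
    show (ω.trans _).trans _ = ω
    rw [Equiv.trans_assoc, extPerm_trans]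
    have h1 : (σ.symm.trans τ).trans (τ.symm.trans σ) = Equiv.refl _ := by ext x; simp
    rw [h1, extPerm_refl, Equiv.trans_refl]
  case ri =>
    intro ω hω
    show (ω.trans _).trans _ = ω
    rw [Equiv.trans_assoc, extPerm_trans]
    have h1 : (τ.symm.trans σ).trans (σ.symm.trans τ) = Equiv.refl _ := by ext x; simp
    rw [h1, extPerm_refl, Equiv.trans_refl]

end Counting2

section Counting3
open scoped Classical
variable {α : Type*} [DecidableEq α]

def QPred (A B : Finset α) (e : α) (he : e ∈ A)
    (σ : Fin (A ∪ B).card ≃ {x // x ∈ A ∪ B}) : Prop :=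
  (∀ x : {x // x ∈ A ∪ B}, (x : α) ∈ A → (x : α) ≠ e →
      σ.symm x < σ.symm ⟨e, Finset.mem_union_left B he⟩) ∧
  (∀ x : {x // x ∈ A ∪ B}, (x : α) ∈ B →
      σ.symm ⟨e, Finset.mem_union_left B he⟩ < σ.symm x)

lemma force {A B : Finset α} (hAB : Disjoint A B) {e : α} (he : e ∈ A)
    (σ : Fin (A ∪ B).card ≃ {x // x ∈ A ∪ B}) (hQ : QPred A B e he σ) :
    (((σ.symm ⟨e, Finset.mem_union_left B he⟩ : Fin (A ∪ B).card) : ℕ) = A.card - 1) ∧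
    (∀ i : Fin (A ∪ B).card, ((i : ℕ) < A.card - 1 ↔ (σ i : α) ∈ A.erase e)) ∧
    (∀ i : Fin (A ∪ B).card, (A.card ≤ (i : ℕ) ↔ (σ i : α) ∈ B)) := by
  have hkab : (A ∪ B).card = A.card + B.card := Finset.card_union_of_disjoint hAB
  have ha1 : 1 ≤ A.card := Finset.card_pos.2 ⟨e, he⟩
  set p : Fin (A ∪ B).card := σ.symm ⟨e, Finset.mem_union_left B he⟩ with hp
  have cardSA : (Finset.univ.filter (fun i : Fin (A ∪ B).card => (σ i : α) ∈ A.erase e)).card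
      = A.card - 1 := by
    rw [show A.card - 1 = (A.erase e).card from (Finset.card_erase_of_mem he).symm]
    apply Finset.card_bij (fun i _ => (σ i : α))
    · intro i hi; simpa using hi
    · intro i hi j hj hij; exact σ.injective (Subtype.ext hij)
    · intro x hx
      have hxU : x ∈ A ∪ B := Finset.mem_union_left B (Finset.mem_of_mem_erase hx)
      exact ⟨σ.symm ⟨x, hxU⟩, by simpa using hx, by simp⟩
  have cardSB : (Finset.univ.filter (fun i : Fin (A ∪ B).card => (σ i : α) ∈ B)).card
      = B.card := by
    apply Finset.card_bij (fun i _ => (σ i : α))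
    · intro i hi; simpa using hi
    · intro i hi j hj hij; exact σ.injective (Subtype.ext hij)
    · intro x hx
      exact ⟨σ.symm ⟨x, Finset.mem_union_right A hx⟩, by simpa using hx, by simp⟩
  have hSAsub : (Finset.univ.filter (fun i : Fin (A ∪ B).card => (σ i : α) ∈ A.erase e))
      ⊆ Finset.Iio p := by
    intro i hi
    rw [Finset.mem_Iio]
    simp only [Finset.mem_filter, Finset.mem_univ, true_and] at hi
    have h := hQ.1 (σ i) (Finset.mem_of_mem_erase hi) (Finset.ne_of_mem_erase hi)
    rw [Equiv.symm_apply_apply] at h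
    exact h
  have hSBsub : (Finset.univ.filter (fun i : Fin (A ∪ B).card => (σ i : α) ∈ B))
      ⊆ Finset.Ioi p := by
    intro i hi
    rw [Finset.mem_Ioi]
    simp only [Finset.mem_filter, Finset.mem_univ, true_and] at hi
    have h := hQ.2 (σ i) hi
    rw [Equiv.symm_apply_apply] at h
    exact h
  have h1 : A.card - 1 ≤ (p : ℕ) := by
    have := Finset.card_le_card hSAsub
    rwa [cardSA, Fin.card_Iio] at this
  have h2 : B.card ≤ (A ∪ B).card - 1 - (p : ℕ) := by
    have := Finset.card_le_card hSBsub
    rwa [cardSB, Fin.card_Ioi] at this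
  have hpval : (p : ℕ) = A.card - 1 := by
    have := p.isLt
    omega
  have hSAeq : (Finset.univ.filter (fun i : Fin (A ∪ B).card => (σ i : α) ∈ A.erase e))
      = Finset.Iio p := by
    apply Finset.eq_of_subset_of_card_le hSAsub
    rw [Fin.card_Iio, cardSA, hpval]
  have hSBeq : (Finset.univ.filter (fun i : Fin (A ∪ B).card => (σ i : α) ∈ B))
      = Finset.Ioi p := by
    apply Finset.eq_of_subset_of_card_le hSBsub
    rw [Fin.card_Ioi, cardSB, hpval]
    omega
  refine ⟨hpval, ?_, ?_⟩
  · intro i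
    have hmem : (σ i : α) ∈ A.erase e ↔ i ∈ Finset.Iio p := by
      rw [← hSAeq]; simp
    rw [hmem, Finset.mem_Iio, Fin.lt_def, hpval]
  · intro i
    have hmem : (σ i : α) ∈ B ↔ i ∈ Finset.Ioi p := by
      rw [← hSBeq]; simp
    rw [hmem, Finset.mem_Ioi, Fin.lt_def, hpval]
    omega

end Counting3

section Counting4
open scoped Classical
variable {α : Type*} [DecidableEq α]

lemma lt_card_union_of_lt_pred {A B : Finset α} {e : α} (he : e ∈ A) {i : ℕ}
    (h : i < A.card - 1) : i < (A ∪ B).card := by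
  have h1 : A.card ≤ (A ∪ B).card := Finset.card_le_card Finset.subset_union_left
  have h2 : 1 ≤ A.card := Finset.card_pos.2 ⟨e, he⟩
  omega

noncomputable def PhiA {A B : Finset α} (hAB : Disjoint A B) {e : α} (he : e ∈ A)
    (σ : Fin (A ∪ B).card ≃ {x // x ∈ A ∪ B}) (hσ : QPred A B e he σ) :
    Fin (A.card - 1) ≃ {x // x ∈ A.erase e} := by
  refine Equiv.ofBijective
    (fun i => ⟨(σ ⟨(i : ℕ), lt_card_union_of_lt_pred he i.isLt⟩ : α),
      ((force hAB he σ hσ).2.1 _).1 i.isLt⟩) ?_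
  rw [Fintype.bijective_iff_injective_and_card]
  constructor
  · intro i j hij
    have hv : (σ ⟨(i : ℕ), lt_card_union_of_lt_pred he i.isLt⟩ : α)
        = (σ ⟨(j : ℕ), lt_card_union_of_lt_pred he j.isLt⟩ : α) := by
      simpa using congrArg Subtype.val hij
    have h2 := σ.injective (Subtype.ext hv)
    exact Fin.ext (by simpa using congrArg Fin.val h2)
  · simp [Fintype.card_coe, Finset.card_erase_of_mem he]

lemma PhiA_apply_val {A B : Finset α} (hAB : Disjoint A B) {e : α} (he : e ∈ A)
    (σ : Fin (A ∪ B).card ≃ {x // x ∈ A ∪ B}) (hσ : QPred A B e he σ)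
    (i : Fin (A.card - 1)) :
    (PhiA hAB he σ hσ i : α) = (σ ⟨(i : ℕ), lt_card_union_of_lt_pred he i.isLt⟩ : α) := rfl

lemma add_lt_card_union {A B : Finset α} (hAB : Disjoint A B) {j : ℕ} (h : j < B.card) :
    A.card + j < (A ∪ B).card := by
  rw [Finset.card_union_of_disjoint hAB]; omega

noncomputable def PhiB {A B : Finset α} (hAB : Disjoint A B) {e : α} (he : e ∈ A)
    (σ : Fin (A ∪ B).card ≃ {x // x ∈ A ∪ B}) (hσ : QPred A B e he σ) :
    Fin B.card ≃ {x // x ∈ B} := by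
  refine Equiv.ofBijective
    (fun j => ⟨(σ ⟨A.card + (j : ℕ), add_lt_card_union hAB j.isLt⟩ : α),
      ((force hAB he σ hσ).2.2 _).1 (by simp)⟩) ?_
  rw [Fintype.bijective_iff_injective_and_card]
  constructor
  · intro i j hij
    have hv : (σ ⟨A.card + (i : ℕ), add_lt_card_union hAB i.isLt⟩ : α)
        = (σ ⟨A.card + (j : ℕ), add_lt_card_union hAB j.isLt⟩ : α) := by
      simpa using congrArg Subtype.val hij
    have h2 := σ.injective (Subtype.ext hv)
    have h3 := congrArg Fin.val h2
    simp only [] at h3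
    exact Fin.ext (by omega)
  · simp [Fintype.card_coe]

lemma PhiB_apply_val {A B : Finset α} (hAB : Disjoint A B) {e : α} (he : e ∈ A)
    (σ : Fin (A ∪ B).card ≃ {x // x ∈ A ∪ B}) (hσ : QPred A B e he σ)
    (j : Fin B.card) :
    (PhiB hAB he σ hσ j : α) = (σ ⟨A.card + (j : ℕ), add_lt_card_union hAB j.isLt⟩ : α) := rfl

lemma Phi_inj {A B : Finset α} (hAB : Disjoint A B) {e : α} (he : e ∈ A)
    (σ σ' : Fin (A ∪ B).card ≃ {x // x ∈ A ∪ B}) (hσ : QPred A B e he σ)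
    (hσ' : QPred A B e he σ')
    (hA : PhiA hAB he σ hσ = PhiA hAB he σ' hσ')
    (hB : PhiB hAB he σ hσ = PhiB hAB he σ' hσ') : σ = σ' := by
  have hkab : (A ∪ B).card = A.card + B.card := Finset.card_union_of_disjoint hAB
  have ha1 : 1 ≤ A.card := Finset.card_pos.2 ⟨e, he⟩
  apply Equiv.ext
  intro i
  apply Subtype.ext
  by_cases h1 : (i : ℕ) < A.card - 1
  · have := congrArg (fun E => (E ⟨(i : ℕ), h1⟩ : α)) hA
    simp only [PhiA_apply_val] at this
    have heta : (⟨((⟨(i : ℕ), h1⟩ : Fin (A.card - 1)) : ℕ),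
        lt_card_union_of_lt_pred he (⟨(i : ℕ), h1⟩ : Fin (A.card - 1)).isLt⟩
        : Fin (A ∪ B).card) = i := Fin.ext rfl
    rwa [heta] at this
  · by_cases h2 : (i : ℕ) = A.card - 1
    · have k1 := (force hAB he σ hσ).1
      have k2 := (force hAB he σ' hσ').1
      have e1 : σ.symm ⟨e, Finset.mem_union_left B he⟩ = i := Fin.ext (by omega)
      have e2 : σ'.symm ⟨e, Finset.mem_union_left B he⟩ = i := Fin.ext (by omega)
      have f1 : σ i = ⟨e, Finset.mem_union_left B he⟩ := by
        rw [← e1, Equiv.apply_symm_apply]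
      have f2 : σ' i = ⟨e, Finset.mem_union_left B he⟩ := by
        rw [← e2, Equiv.apply_symm_apply]
      rw [f1, f2]
    · have hge : A.card ≤ (i : ℕ) := by omega
      have hjlt : (i : ℕ) - A.card < B.card := by
        have := i.isLt; omega
      have := congrArg (fun E => (E ⟨(i : ℕ) - A.card, hjlt⟩ : α)) hB
      simp only [PhiB_apply_val] at this
      have heta : (⟨A.card + (((⟨(i : ℕ) - A.card, hjlt⟩ : Fin B.card)) : ℕ),
          add_lt_card_union hAB (⟨(i : ℕ) - A.card, hjlt⟩ : Fin B.card).isLt⟩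
          : Fin (A ∪ B).card) = i := Fin.ext (by simp; omega)
      rwa [heta] at this

end Counting4

section Counting5
open scoped Classical
variable {α : Type*} [DecidableEq α]

noncomputable def psiFun (A B : Finset α) (e : α) (he : e ∈ A) (hAB : Disjoint A B)
    (g : Fin (A.card - 1) ≃ {x // x ∈ A.erase e}) (h : Fin B.card ≃ {x // x ∈ B}) :
    Fin (A ∪ B).card → {x // x ∈ A ∪ B} := fun i =>
  if h1 : (i : ℕ) < A.card - 1 then
    ⟨(g ⟨(i : ℕ), h1⟩ : α),
      Finset.mem_union_left B (Finset.mem_of_mem_erase (g ⟨(i : ℕ), h1⟩).2)⟩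
  else if h2 : (i : ℕ) = A.card - 1 then ⟨e, Finset.mem_union_left B he⟩
  else ⟨(h ⟨(i : ℕ) - A.card, by
      have hk := Finset.card_union_of_disjoint hAB
      have := i.isLt
      have ha1 : 1 ≤ A.card := Finset.card_pos.2 ⟨e, he⟩
      omega⟩ : α),
    Finset.mem_union_right A (h _).2⟩

lemma psiFun_val_lt (A B : Finset α) (e : α) (he : e ∈ A) (hAB : Disjoint A B)
    (g : Fin (A.card - 1) ≃ {x // x ∈ A.erase e}) (h : Fin B.card ≃ {x // x ∈ B})
    (i : Fin (A ∪ B).card) (h1 : (i : ℕ) < A.card - 1) :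
    (psiFun A B e he hAB g h i : α) = (g ⟨(i : ℕ), h1⟩ : α) := by
  unfold psiFun; rw [dif_pos h1]

lemma psiFun_val_eq (A B : Finset α) (e : α) (he : e ∈ A) (hAB : Disjoint A B)
    (g : Fin (A.card - 1) ≃ {x // x ∈ A.erase e}) (h : Fin B.card ≃ {x // x ∈ B})
    (i : Fin (A ∪ B).card) (h2 : (i : ℕ) = A.card - 1) :
    (psiFun A B e he hAB g h i : α) = e := by
  unfold psiFun; rw [dif_neg (by omega), dif_pos h2]

lemma psiFun_val_ge (A B : Finset α) (e : α) (he : e ∈ A) (hAB : Disjoint A B)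
    (g : Fin (A.card - 1) ≃ {x // x ∈ A.erase e}) (h : Fin B.card ≃ {x // x ∈ B})
    (i : Fin (A ∪ B).card) (h3 : A.card ≤ (i : ℕ)) (hb : (i : ℕ) - A.card < B.card) :
    (psiFun A B e he hAB g h i : α) = (h ⟨(i : ℕ) - A.card, hb⟩ : α) := by
  have ha1 : 1 ≤ A.card := Finset.card_pos.2 ⟨e, he⟩
  unfold psiFun
  rw [dif_neg (by omega), dif_neg (by omega)]

lemma psiFun_mem_region (A B : Finset α) (e : α) (he : e ∈ A) (hAB : Disjoint A B)
    (g : Fin (A.card - 1) ≃ {x // x ∈ A.erase e}) (h : Fin B.card ≃ {x // x ∈ B})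
    (i : Fin (A ∪ B).card) :
    ((i : ℕ) < A.card - 1 → (psiFun A B e he hAB g h i : α) ∈ A.erase e) ∧
    (((i : ℕ) = A.card - 1) → (psiFun A B e he hAB g h i : α) = e) ∧
    (A.card ≤ (i : ℕ) → (psiFun A B e he hAB g h i : α) ∈ B) := by
  have ha1 : 1 ≤ A.card := Finset.card_pos.2 ⟨e, he⟩
  have hk := Finset.card_union_of_disjoint hAB
  have hilt := i.isLt
  refine ⟨fun h1 => ?_, fun h2 => psiFun_val_eq A B e he hAB g h i h2, fun h3 => ?_⟩
  · rw [psiFun_val_lt A B e he hAB g h i h1]; exact (g _).2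
  · rw [psiFun_val_ge A B e he hAB g h i h3 (by omega)]; exact (h _).2

lemma psiFun_injective (A B : Finset α) (e : α) (he : e ∈ A) (hAB : Disjoint A B)
    (g : Fin (A.card - 1) ≃ {x // x ∈ A.erase e}) (h : Fin B.card ≃ {x // x ∈ B}) :
    Function.Injective (psiFun A B e he hAB g h) := by
  have ha1 : 1 ≤ A.card := Finset.card_pos.2 ⟨e, he⟩
  have hk := Finset.card_union_of_disjoint hAB
  intro i j hij
  have hv : (psiFun A B e he hAB g h i : α) = (psiFun A B e he hAB g h j : α) :=
    congrArg Subtype.val hij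
  have hilt := i.isLt
  have hjlt := j.isLt
  -- region classification facts
  have Ri := psiFun_mem_region A B e he hAB g h i
  have Rj := psiFun_mem_region A B e he hAB g h j
  by_cases h1 : (i : ℕ) < A.card - 1
  · -- value in A.erase e
    have hvi := Ri.1 h1
    rw [hv] at hvi
    -- j must be in region 1
    have hj1 : (j : ℕ) < A.card - 1 := by
      by_contra hc
      by_cases hj2 : (j : ℕ) = A.card - 1
      · have := Rj.2.1 hj2
        rw [this] at hvi
        exact (Finset.ne_of_mem_erase hvi) rfl
      · have := Rj.2.2 (by omega)
        have hmemA : (psiFun A B e he hAB g h j : α) ∈ A := Finset.mem_of_mem_erase hvi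
        exact (Finset.disjoint_left.1 hAB hmemA) this
    rw [psiFun_val_lt A B e he hAB g h i h1, psiFun_val_lt A B e he hAB g h j hj1] at hv
    have := g.injective (Subtype.ext hv)
    exact Fin.ext (by simpa using congrArg Fin.val this)
  · by_cases h2 : (i : ℕ) = A.card - 1
    · have hvi := Ri.2.1 h2
      rw [hv] at hvi
      have hj2 : (j : ℕ) = A.card - 1 := by
        by_contra hc
        by_cases hj1 : (j : ℕ) < A.card - 1
        · exact (Finset.ne_of_mem_erase (Rj.1 hj1)) hvi
        · have := Rj.2.2 (by omega)
          rw [hvi] at this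
          exact (Finset.disjoint_left.1 hAB he) this
      exact Fin.ext (by omega)
    · have h3 : A.card ≤ (i : ℕ) := by omega
      have hvi := Ri.2.2 h3
      rw [hv] at hvi
      have hj3 : A.card ≤ (j : ℕ) := by
        by_contra hc
        by_cases hj1 : (j : ℕ) < A.card - 1
        · have := Rj.1 hj1
          exact (Finset.disjoint_left.1 hAB (Finset.mem_of_mem_erase this)) hvi
        · have hj2 : (j : ℕ) = A.card - 1 := by omega
          have := Rj.2.1 hj2
          rw [this] at hvi
          exact (Finset.disjoint_left.1 hAB he) hvi
      rw [psiFun_val_ge A B e he hAB g h i h3 (by omega),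
        psiFun_val_ge A B e he hAB g h j hj3 (by omega)] at hv
      have := h.injective (Subtype.ext hv)
      have h5 := congrArg Fin.val this
      simp only [] at h5
      exact Fin.ext (by omega)

noncomputable def psiEquiv (A B : Finset α) (e : α) (he : e ∈ A) (hAB : Disjoint A B)
    (g : Fin (A.card - 1) ≃ {x // x ∈ A.erase e}) (h : Fin B.card ≃ {x // x ∈ B}) :
    Fin (A ∪ B).card ≃ {x // x ∈ A ∪ B} :=
  Equiv.ofBijective (psiFun A B e he hAB g h)
    ((Fintype.bijective_iff_injective_and_card _).2
      ⟨psiFun_injective A B e he hAB g h, by simp [Fintype.card_coe]⟩)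

lemma psiEquiv_Q (A B : Finset α) (e : α) (he : e ∈ A) (hAB : Disjoint A B)
    (g : Fin (A.card - 1) ≃ {x // x ∈ A.erase e}) (h : Fin B.card ≃ {x // x ∈ B}) :
    QPred A B e he (psiEquiv A B e he hAB g h) := by
  have ha1 : 1 ≤ A.card := Finset.card_pos.2 ⟨e, he⟩
  have hk := Finset.card_union_of_disjoint hAB
  set σ := psiEquiv A B e he hAB g h with hσ
  have happ : ∀ i, (σ i : α) = (psiFun A B e he hAB g h i : α) := fun i => rfl
  have hsymm_e : ((σ.symm ⟨e, Finset.mem_union_left B he⟩ : Fin (A ∪ B).card) : ℕ)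
      = A.card - 1 := by
    have hlt : A.card - 1 < (A ∪ B).card := by omega
    have : σ ⟨A.card - 1, hlt⟩ = ⟨e, Finset.mem_union_left B he⟩ := by
      apply Subtype.ext
      rw [happ]
      exact psiFun_val_eq A B e he hAB g h _ rfl
    rw [← this, Equiv.symm_apply_apply]
  constructor
  · intro x hxA hxe
    set i := σ.symm x with hi
    have hx : σ i = x := Equiv.apply_symm_apply σ x
    have hregion := psiFun_mem_region A B e he hAB g h i
    have hival : (i : ℕ) < A.card - 1 := by
      by_contra hc
      by_cases h2 : (i : ℕ) = A.card - 1
      · have := hregion.2.1 h2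
        rw [← happ, hx] at this
        exact hxe this
      · have := hregion.2.2 (by have := i.isLt; omega)
        rw [← happ, hx] at this
        exact (Finset.disjoint_left.1 hAB hxA) this
    rw [Fin.lt_def, hsymm_e]
    exact hival
  · intro x hxB
    set i := σ.symm x with hi
    have hx : σ i = x := Equiv.apply_symm_apply σ x
    have hregion := psiFun_mem_region A B e he hAB g h i
    have hival : A.card ≤ (i : ℕ) := by
      by_contra hc
      by_cases h1 : (i : ℕ) < A.card - 1
      · have := hregion.1 h1
        rw [← happ, hx] at this
        exact (Finset.disjoint_left.1 hAB (Finset.mem_of_mem_erase this)) hxB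
      · have h2 : (i : ℕ) = A.card - 1 := by omega
        have := hregion.2.1 h2
        rw [← happ, hx] at this
        rw [this] at hxB
        exact (Finset.disjoint_left.1 hAB he) hxB
    rw [Fin.lt_def, hsymm_e]
    omega

lemma psiEquiv_inj (A B : Finset α) (e : α) (he : e ∈ A) (hAB : Disjoint A B)
    (g g' : Fin (A.card - 1) ≃ {x // x ∈ A.erase e}) (h h' : Fin B.card ≃ {x // x ∈ B})
    (heq : psiEquiv A B e he hAB g h = psiEquiv A B e he hAB g' h') :
    g = g' ∧ h = h' := by
  have ha1 : 1 ≤ A.card := Finset.card_pos.2 ⟨e, he⟩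
  have hk := Finset.card_union_of_disjoint hAB
  have hfun : ∀ i, (psiFun A B e he hAB g h i : α) = (psiFun A B e he hAB g' h' i : α) := by
    intro i
    exact congrArg (fun E => ((E : Fin (A ∪ B).card ≃ {x // x ∈ A ∪ B}) i : α)) heq
  constructor
  · apply Equiv.ext
    intro i
    apply Subtype.ext
    have hlt : ((i : ℕ)) < A.card - 1 := i.isLt
    have hlt2 : ((i : ℕ)) < (A ∪ B).card := by omega
    have := hfun ⟨(i : ℕ), hlt2⟩
    rw [psiFun_val_lt A B e he hAB g h _ hlt, psiFun_val_lt A B e he hAB g' h' _ hlt] at this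
    have heta : (⟨((⟨(i : ℕ), hlt2⟩ : Fin (A ∪ B).card) : ℕ), hlt⟩ : Fin (A.card - 1)) = i :=
      Fin.ext rfl
    rwa [heta] at this
  · apply Equiv.ext
    intro j
    apply Subtype.ext
    have hjlt := j.isLt
    have hlt2 : A.card + (j : ℕ) < (A ∪ B).card := by omega
    have := hfun ⟨A.card + (j : ℕ), hlt2⟩
    have hge : A.card ≤ ((⟨A.card + (j : ℕ), hlt2⟩ : Fin (A ∪ B).card) : ℕ) := by simp
    have hb : ((⟨A.card + (j : ℕ), hlt2⟩ : Fin (A ∪ B).card) : ℕ) - A.card < B.card := by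
      simp
    rw [psiFun_val_ge A B e he hAB g h _ hge hb, psiFun_val_ge A B e he hAB g' h' _ hge hb]
      at this
    have heta : (⟨((⟨A.card + (j : ℕ), hlt2⟩ : Fin (A ∪ B).card) : ℕ) - A.card, hb⟩
        : Fin B.card) = j := Fin.ext (by simp)
    rwa [heta] at this

end Counting5

section Counting6
open scoped Classical
variable {α : Type*} [DecidableEq α]

lemma count_valid (A B : Finset α) (hAB : Disjoint A B) (e : α) (he : e ∈ A) :
    (Finset.univ.filter (QPred A B e he)).card
      = (A.card - 1).factorial * B.card.factorial := by
  have hcsub : (Finset.univ.filter (QPred A B e he)).card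
      = Fintype.card {σ // QPred A B e he σ} := (Fintype.card_subtype _).symm
  rw [hcsub]
  have e1 : Fintype.card {x // x ∈ A.erase e} = A.card - 1 := by
    simp [Fintype.card_coe, Finset.card_erase_of_mem he]
  have e2 : Fintype.card {x // x ∈ B} = B.card := Fintype.card_coe B
  have cardProd : Fintype.card ((Fin (A.card - 1) ≃ {x // x ∈ A.erase e})
      × (Fin B.card ≃ {x // x ∈ B})) = (A.card - 1).factorial * B.card.factorial := by
    rw [Fintype.card_prod, Fintype.card_equiv ((Fintype.equivFinOfCardEq e1).symm),
      Fintype.card_equiv ((Fintype.equivFinOfCardEq e2).symm), Fintype.card_fin,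
      Fintype.card_fin]
  rw [← cardProd]
  apply le_antisymm
  · apply Fintype.card_le_of_injective
      (fun σh => (PhiA hAB he σh.1 σh.2, PhiB hAB he σh.1 σh.2))
    rintro ⟨σ, hσ⟩ ⟨σ', hσ'⟩ hxy
    have h1 := congrArg Prod.fst hxy
    have h2 := congrArg Prod.snd hxy
    simp only [] at h1 h2
    exact Subtype.ext (Phi_inj hAB he σ σ' hσ hσ' h1 h2)
  · apply Fintype.card_le_of_injective
      (fun gh => ⟨psiEquiv A B e he hAB gh.1 gh.2, psiEquiv_Q A B e he hAB gh.1 gh.2⟩)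
    rintro ⟨g, h⟩ ⟨g', h'⟩ hxy
    have := psiEquiv_inj A B e he hAB g g' h h' (by simpa using congrArg Subtype.val hxy)
    exact Prod.ext this.1 this.2

lemma main_count {s : Finset α} (A B : Finset α) (hAs : A ⊆ s) (hBs : B ⊆ s)
    (hAB : Disjoint A B) (e : α) (he : e ∈ A) :
    (Finset.univ.filter fun ω : Fin s.card ≃ {x // x ∈ s} =>
      (∀ x : {x // x ∈ s}, (x : α) ∈ A → (x : α) ≠ e →
        (ω.symm x : ℕ) < (ω.symm ⟨e, hAs he⟩ : ℕ)) ∧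
      (∀ x : {x // x ∈ s}, (x : α) ∈ B →
        (ω.symm ⟨e, hAs he⟩ : ℕ) < (ω.symm x : ℕ))).card
      * (A.card + B.card).factorial
    = (A.card - 1).factorial * B.card.factorial * s.card.factorial := by
  have hUs : A ∪ B ⊆ s := Finset.union_subset hAs hBs
  have key : ∀ ω : Fin s.card ≃ {x // x ∈ s},
      ((∀ x : {x // x ∈ s}, (x : α) ∈ A → (x : α) ≠ e →
          (ω.symm x : ℕ) < (ω.symm ⟨e, hAs he⟩ : ℕ)) ∧
        (∀ x : {x // x ∈ s}, (x : α) ∈ B →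
          (ω.symm ⟨e, hAs he⟩ : ℕ) < (ω.symm x : ℕ)))
      ↔ QPred A B e he (pat (A ∪ B) hUs ω) := by
    intro ω
    have hee : (⟨e, hUs (Finset.mem_union_left B he)⟩ : {x // x ∈ s}) = ⟨e, hAs he⟩ :=
      Subtype.ext rfl
    constructor
    · rintro ⟨hP1, hP2⟩
      constructor
      · intro x hxA hxe
        rw [pat_symm_lt_iff]
        have := hP1 ⟨(x : α), hUs x.2⟩ hxA hxe
        rwa [hee]
      · intro x hxB
        rw [pat_symm_lt_iff]
        have := hP2 ⟨(x : α), hUs x.2⟩ hxB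
        rwa [hee]
    · rintro ⟨hQ1, hQ2⟩
      constructor
      · intro x hxA hxe
        have := hQ1 ⟨(x : α), Finset.mem_union_left B hxA⟩ hxA hxe
        rw [pat_symm_lt_iff] at this
        rw [hee] at this
        have hx : (⟨((⟨(x : α), Finset.mem_union_left B hxA⟩ : {x // x ∈ A ∪ B}) : α),
            hUs (Finset.mem_union_left B hxA)⟩ : {x // x ∈ s}) = x := Subtype.ext rfl
        rwa [hx] at this
      · intro x hxB
        have := hQ2 ⟨(x : α), Finset.mem_union_right A hxB⟩ hxB
        rw [pat_symm_lt_iff] at this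
        rw [hee] at this
        have hx : (⟨((⟨(x : α), Finset.mem_union_right A hxB⟩ : {x // x ∈ A ∪ B}) : α),
            hUs (Finset.mem_union_right A hxB)⟩ : {x // x ∈ s}) = x := Subtype.ext rfl
        rwa [hx] at this
  -- canonical pattern
  have hτ0 : Nonempty (Fin (A ∪ B).card ≃ {x // x ∈ A ∪ B}) :=
    ⟨(Fintype.equivFinOfCardEq (Fintype.card_coe (A ∪ B))).symm⟩
  obtain ⟨τ0⟩ := hτ0
  set c0 := (Finset.univ.filter fun ω : Fin s.card ≃ {x // x ∈ s} =>
    pat (A ∪ B) hUs ω = τ0).card with hc0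
  -- total count
  have htotal : s.card.factorial = (A ∪ B).card.factorial * c0 := by
    have h1 : (Finset.univ : Finset (Fin s.card ≃ {x // x ∈ s})).card
        = ∑ σ ∈ (Finset.univ : Finset (Fin (A ∪ B).card ≃ {x // x ∈ A ∪ B})),
          (Finset.univ.filter fun ω => pat (A ∪ B) hUs ω = σ).card :=
      Finset.card_eq_sum_card_fiberwise (fun ω _ => Finset.mem_univ _)
    have h2 : ∀ σ ∈ (Finset.univ : Finset (Fin (A ∪ B).card ≃ {x // x ∈ A ∪ B})),
        (Finset.univ.filter fun ω : Fin s.card ≃ {x // x ∈ s} =>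
          pat (A ∪ B) hUs ω = σ).card = c0 := fun σ _ => fiber_card_eq (A ∪ B) hUs σ τ0
    rw [Finset.sum_congr rfl h2, Finset.sum_const, smul_eq_mul] at h1
    have h3 : (Finset.univ : Finset (Fin s.card ≃ {x // x ∈ s})).card = s.card.factorial := by
      rw [Finset.card_univ, Fintype.card_equiv (Fintype.equivFinOfCardEq (Fintype.card_coe s)).symm, Fintype.card_fin]
    have h4 : (Finset.univ : Finset (Fin (A ∪ B).card ≃ {x // x ∈ A ∪ B})).card
        = (A ∪ B).card.factorial := by
      rw [Finset.card_univ, Fintype.card_equiv (Fintype.equivFinOfCardEq (Fintype.card_coe (A ∪ B))).symm, Fintype.card_fin]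
    rw [← h3, h1, h4]
  -- count of the event
  have hevent : (Finset.univ.filter fun ω : Fin s.card ≃ {x // x ∈ s} =>
      (∀ x : {x // x ∈ s}, (x : α) ∈ A → (x : α) ≠ e →
        (ω.symm x : ℕ) < (ω.symm ⟨e, hAs he⟩ : ℕ)) ∧
      (∀ x : {x // x ∈ s}, (x : α) ∈ B →
        (ω.symm ⟨e, hAs he⟩ : ℕ) < (ω.symm x : ℕ))).card
      = (A.card - 1).factorial * B.card.factorial * c0 := by
    have hfe : (Finset.univ.filter fun ω : Fin s.card ≃ {x // x ∈ s} =>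
        (∀ x : {x // x ∈ s}, (x : α) ∈ A → (x : α) ≠ e →
          (ω.symm x : ℕ) < (ω.symm ⟨e, hAs he⟩ : ℕ)) ∧
        (∀ x : {x // x ∈ s}, (x : α) ∈ B →
          (ω.symm ⟨e, hAs he⟩ : ℕ) < (ω.symm x : ℕ)))
        = Finset.univ.filter (fun ω => QPred A B e he (pat (A ∪ B) hUs ω)) := by
      apply Finset.filter_congr
      intro ω _
      exact iff_iff_eq.1 (key ω) ▸ Iff.rfl
    rw [hfe]
    have h1 : (Finset.univ.filter (fun ω : Fin s.card ≃ {x // x ∈ s} =>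
        QPred A B e he (pat (A ∪ B) hUs ω))).card
        = ∑ σ ∈ Finset.univ.filter (QPred A B e he),
          ((Finset.univ.filter (fun ω : Fin s.card ≃ {x // x ∈ s} =>
            QPred A B e he (pat (A ∪ B) hUs ω))).filter
            (fun ω => pat (A ∪ B) hUs ω = σ)).card := by
      apply Finset.card_eq_sum_card_fiberwise
      intro ω hω
      simp only [Finset.mem_coe, Finset.mem_filter, Finset.mem_univ, true_and] at hω ⊢
      exact hω
    have h2 : ∀ σ ∈ Finset.univ.filter (QPred A B e he),
        ((Finset.univ.filter (fun ω : Fin s.card ≃ {x // x ∈ s} =>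
          QPred A B e he (pat (A ∪ B) hUs ω))).filter
          (fun ω => pat (A ∪ B) hUs ω = σ)).card = c0 := by
      intro σ hσ
      simp only [Finset.mem_filter, Finset.mem_univ, true_and] at hσ
      have : (Finset.univ.filter (fun ω : Fin s.card ≃ {x // x ∈ s} =>
          QPred A B e he (pat (A ∪ B) hUs ω))).filter
          (fun ω => pat (A ∪ B) hUs ω = σ)
          = Finset.univ.filter (fun ω : Fin s.card ≃ {x // x ∈ s} =>
            pat (A ∪ B) hUs ω = σ) := by
        ext ω
        simp only [Finset.mem_filter, Finset.mem_univ, true_and]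
        constructor
        · rintro ⟨_, h⟩; exact h
        · intro h; exact ⟨by rw [h]; exact hσ, h⟩
      rw [this]
      exact fiber_card_eq (A ∪ B) hUs σ τ0
    rw [h1, Finset.sum_congr rfl h2, Finset.sum_const, smul_eq_mul,
      count_valid A B hAB e he]
  rw [hevent, htotal, Finset.card_union_of_disjoint hAB]
  ring
end Counting6

section GraphSide
open scoped Classical
variable {V : Type*} [Fintype V] [DecidableEq V]

/-- edges of `J` as a subset of `G`'s edge finset. -/
noncomputable def EJ (G : SimpleGraph V) [DecidableRel G.Adj] (J : SimpleGraph V) :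
    Finset (Sym2 V) := G.edgeFinset.filter (· ∈ J.edgeSet)

/-- non-`J` edges of `G` at `w`. -/
noncomputable def BW (G : SimpleGraph V) [DecidableRel G.Adj] (J : SimpleGraph V) (w : V) :
    Finset (Sym2 V) := G.edgeFinset.filter (fun f => w ∈ f ∧ f ∉ J.edgeSet)

lemma mem_EJ {G : SimpleGraph V} [DecidableRel G.Adj] {J : SimpleGraph V} (hJG : J ≤ G)
    {f : Sym2 V} : f ∈ EJ G J ↔ f ∈ J.edgeSet := by
  unfold EJ
  simp only [Finset.mem_filter, SimpleGraph.mem_edgeFinset]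
  exact ⟨fun h => h.2, fun h => ⟨SimpleGraph.edgeSet_mono hJG h, h⟩⟩

lemma EJ_subset {G : SimpleGraph V} [DecidableRel G.Adj] {J : SimpleGraph V} :
    EJ G J ⊆ G.edgeFinset := Finset.filter_subset _ _

lemma BW_subset {G : SimpleGraph V} [DecidableRel G.Adj] {J : SimpleGraph V} {w : V} :
    BW G J w ⊆ G.edgeFinset := Finset.filter_subset _ _

lemma EJ_BW_disjoint {G : SimpleGraph V} [DecidableRel G.Adj] {J : SimpleGraph V}
    (hJG : J ≤ G) {w : V} : Disjoint (EJ G J) (BW G J w) := by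
  rw [Finset.disjoint_left]
  intro f hf hfb
  unfold BW at hfb
  rw [mem_EJ hJG] at hf
  simp only [Finset.mem_filter] at hfb
  exact hfb.2.2 hf

lemma EJ_filter_card {G : SimpleGraph V} [DecidableRel G.Adj] {J : SimpleGraph V}
    (hJG : J ≤ G) (hreg : regOfDegree J 2) (v : V) :
    ((EJ G J).filter (fun f => v ∈ f)).card = 2 := by
  have h1 : (EJ G J).filter (fun f => v ∈ f) = (J.incidenceSet v).toFinset := by
    ext f
    simp only [Finset.mem_filter, Set.mem_toFinset, SimpleGraph.incidenceSet,
      Set.mem_sep_iff, mem_EJ hJG]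
    exact (Set.mem_toFinset (s := J.incidenceSet v)).symm
  rw [h1, ← Set.ncard_eq_toFinset_card']
  have h2 : (J.incidenceSet v).ncard = (J.neighborSet v).ncard := by
    rw [← Nat.card_coe_set_eq, ← Nat.card_coe_set_eq]
    exact Nat.card_congr (J.incidenceSetEquivNeighborSet v)
  rw [h2, hreg v]

lemma two_mem_card {G : SimpleGraph V} [DecidableRel G.Adj] {e : Sym2 V}
    (he : e ∈ G.edgeFinset) : (Finset.univ.filter (fun v : V => v ∈ e)).card = 2 := by
  rw [SimpleGraph.mem_edgeFinset] at he
  have hnd := G.not_isDiag_of_mem_edgeSet he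
  induction e with
  | _ u v =>
    have huv : u ≠ v := by simpa [Sym2.isDiag_iff_proj_eq] using hnd
    have : Finset.univ.filter (fun w : V => w ∈ s(u, v)) = {u, v} := by
      ext w
      simp [Sym2.mem_iff]
    rw [this, Finset.card_insert_of_notMem (by simpa using huv), Finset.card_singleton]

lemma EJ_card {G : SimpleGraph V} [DecidableRel G.Adj] {J : SimpleGraph V}
    (hJG : J ≤ G) (hreg : regOfDegree J 2) : (EJ G J).card = Fintype.card V := by
  have hdouble : ∑ v : V, ((EJ G J).filter (fun f => v ∈ f)).card
      = ∑ e ∈ EJ G J, (Finset.univ.filter (fun v : V => v ∈ e)).card := by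
    simp_rw [Finset.card_filter]
    rw [Finset.sum_comm]
  have hL : ∑ v : V, ((EJ G J).filter (fun f => v ∈ f)).card = Fintype.card V * 2 := by
    rw [Finset.sum_congr rfl (fun v _ => EJ_filter_card hJG hreg v)]
    simp [mul_comm]
  have hR : ∑ e ∈ EJ G J, (Finset.univ.filter (fun v : V => v ∈ e)).card
      = (EJ G J).card * 2 := by
    rw [Finset.sum_congr rfl (fun e he => two_mem_card (EJ_subset he))]
    simp [mul_comm]
  omega

lemma BW_card {G : SimpleGraph V} [DecidableRel G.Adj] {J : SimpleGraph V} {d : ℕ}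
    (hJG : J ≤ G) (hreg : regOfDegree J 2) (hG : G.IsRegularOfDegree d) (w : V) :
    (BW G J w).card = d - 2 := by
  have hsplit := Finset.card_filter_add_card_filter_not
    (s := G.edgeFinset.filter (fun f => w ∈ f)) (p := fun f => f ∈ J.edgeSet)
  have hdeg : (G.edgeFinset.filter (fun f => w ∈ f)).card = d := by
    rw [← SimpleGraph.incidenceFinset_eq_filter, SimpleGraph.card_incidenceFinset_eq_degree]
    exact hG w
  have h1 : (G.edgeFinset.filter (fun f => w ∈ f)).filter (fun f => f ∈ J.edgeSet)
      = (EJ G J).filter (fun f => w ∈ f) := by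
    unfold EJ
    rw [Finset.filter_filter, Finset.filter_filter]
    apply Finset.filter_congr
    intro f _
    tauto
  have h2 : (G.edgeFinset.filter (fun f => w ∈ f)).filter (fun f => ¬ f ∈ J.edgeSet)
      = BW G J w := by
    unfold BW
    rw [Finset.filter_filter]
  rw [h1, h2, hdeg, EJ_filter_card hJG hreg w] at hsplit
  omega

lemma degIn_ge_two {G : SimpleGraph V} [DecidableRel G.Adj] {d : ℕ}
    (hG : G.IsRegularOfDegree d) (hd : 2 ≤ d) (v : V) : 2 ≤ degIn G.edgeFinset v := by
  unfold degIn
  rw [← SimpleGraph.incidenceFinset_eq_filter, SimpleGraph.card_incidenceFinset_eq_degree]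
  rw [hG v]; exact hd

lemma mem_prefixEdges {s : Finset (Sym2 V)} (ω : Fin s.card ≃ {e : Sym2 V // e ∈ s})
    (i : ℕ) (f : Sym2 V) :
    f ∈ prefixEdges ω i ↔ ∃ hf : f ∈ s, ((ω.symm ⟨f, hf⟩ : Fin s.card) : ℕ) < i := by
  unfold prefixEdges
  simp only [Finset.mem_image, Finset.mem_filter, Finset.mem_univ, true_and]
  constructor
  · rintro ⟨j, hj, rfl⟩
    refine ⟨(ω j).2, ?_⟩
    have : (⟨(ω j : Sym2 V), (ω j).2⟩ : {e : Sym2 V // e ∈ s}) = ω j := Subtype.coe_eta _ _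
    rw [this, Equiv.symm_apply_apply]
    exact hj
  · rintro ⟨hf, hlt⟩
    exact ⟨ω.symm ⟨f, hf⟩, hlt, by simp⟩

lemma prefixEdges_full {s : Finset (Sym2 V)} (ω : Fin s.card ≃ {e : Sym2 V // e ∈ s}) :
    prefixEdges ω s.card = s := by
  ext f
  rw [mem_prefixEdges]
  constructor
  · rintro ⟨hf, _⟩; exact hf
  · intro hf; exact ⟨hf, (ω.symm ⟨f, hf⟩).isLt⟩

lemma prefixEdges_zero {s : Finset (Sym2 V)} (ω : Fin s.card ≃ {e : Sym2 V // e ∈ s}) :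
    prefixEdges ω 0 = ∅ := by
  ext f
  rw [mem_prefixEdges]
  simp

end GraphSide

section GraphChar
open scoped Classical
variable {V : Type*} [Fintype V] [DecidableEq V]

lemma subset_final_iff (G : SimpleGraph V) [DecidableRel G.Adj] {d : ℕ}
    (hG : G.IsRegularOfDegree d) (hd : 2 ≤ d) [Nonempty V]
    (J : SimpleGraph V) (hJG : J ≤ G) (hreg : regOfDegree J 2)
    (ω : Fin G.edgeFinset.card ≃ {e : Sym2 V // e ∈ G.edgeFinset}) :
    J.edgeSet ⊆ ↑(finalEdges 2 ω) ↔
      ∃ e, ∃ he : e ∈ EJ G J, ∃ w, w ∈ e ∧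
        ((∀ x : {x : Sym2 V // x ∈ G.edgeFinset}, (x : Sym2 V) ∈ EJ G J → (x : Sym2 V) ≠ e →
            (ω.symm x : ℕ) < (ω.symm ⟨e, EJ_subset he⟩ : ℕ)) ∧
          (∀ x : {x : Sym2 V // x ∈ G.edgeFinset}, (x : Sym2 V) ∈ BW G J w →
            (ω.symm ⟨e, EJ_subset he⟩ : ℕ) < (ω.symm x : ℕ))) := by
  have posinj : ∀ (f g : Sym2 V) (hf : f ∈ G.edgeFinset) (hg : g ∈ G.edgeFinset),
      ((ω.symm ⟨f, hf⟩ : Fin G.edgeFinset.card) : ℕ)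
        = ((ω.symm ⟨g, hg⟩ : Fin G.edgeFinset.card) : ℕ) → f = g := by
    intro f g hf hg h
    have h2 := ω.symm.injective (Fin.ext h)
    exact congrArg Subtype.val h2
  have hSne : {i | ∀ v : V, 2 ≤ degIn (prefixEdges ω i) v}.Nonempty := by
    refine ⟨G.edgeFinset.card, ?_⟩
    intro v
    rw [prefixEdges_full]
    exact degIn_ge_two hG hd v
  have htS : ∀ v : V, 2 ≤ degIn (prefixEdges ω (stopIndex 2 ω)) v := by
    have := Nat.sInf_mem hSne
    exact this
  have ht0 : stopIndex 2 ω ≠ 0 := by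
    intro h
    have h2 := htS (Classical.arbitrary V)
    rw [h, prefixEdges_zero] at h2
    simp [degIn] at h2
  constructor
  · -- forward
    intro hsub
    have htm1 : ¬ (∀ v : V, 2 ≤ degIn (prefixEdges ω (stopIndex 2 ω - 1)) v) := by
      intro h
      have hlt : stopIndex 2 ω - 1 < sInf {i | ∀ v : V, 2 ≤ degIn (prefixEdges ω i) v} := by
        have : stopIndex 2 ω = sInf {i | ∀ v : V, 2 ≤ degIn (prefixEdges ω i) v} := rfl
        omega
      exact Nat.notMem_of_lt_sInf hlt h
    push_neg at htm1
    obtain ⟨w, hw⟩ := htm1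
    have hposJ : ∀ f (hf : f ∈ EJ G J),
        ((ω.symm ⟨f, EJ_subset hf⟩ : Fin G.edgeFinset.card) : ℕ) < stopIndex 2 ω := by
      intro f hf
      have hfJ : f ∈ J.edgeSet := (mem_EJ hJG).1 hf
      have hfin : f ∈ finalEdges 2 ω := Finset.mem_coe.1 (hsub hfJ)
      unfold finalEdges at hfin
      rw [mem_prefixEdges] at hfin
      obtain ⟨hf', hlt⟩ := hfin
      exact hlt
    obtain ⟨f1, f2, hne, hset⟩ := Finset.card_eq_two.1 (EJ_filter_card hJG hreg w)
    have hbothnot : ¬ (f1 ∈ prefixEdges ω (stopIndex 2 ω - 1)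
        ∧ f2 ∈ prefixEdges ω (stopIndex 2 ω - 1)) := by
      rintro ⟨hc1, hc2⟩
      have hf1 : f1 ∈ (EJ G J).filter (fun f => w ∈ f) := by
        rw [hset]; exact Finset.mem_insert_self _ _
      have hf2 : f2 ∈ (EJ G J).filter (fun f => w ∈ f) := by
        rw [hset]; exact Finset.mem_insert_of_mem (Finset.mem_singleton_self _)
      have hsubs : ({f1, f2} : Finset (Sym2 V))
          ⊆ (prefixEdges ω (stopIndex 2 ω - 1)).filter (fun f => w ∈ f) := by
        intro g hg
        rcases Finset.mem_insert.1 hg with rfl | hg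
        · exact Finset.mem_filter.2 ⟨hc1, (Finset.mem_filter.1 hf1).2⟩
        · rw [Finset.mem_singleton.1 hg]
          exact Finset.mem_filter.2 ⟨hc2, (Finset.mem_filter.1 hf2).2⟩
      have hcard2 : ({f1, f2} : Finset (Sym2 V)).card = 2 := by
        rw [Finset.card_insert_of_notMem (by simpa using hne), Finset.card_singleton]
      have hle := Finset.card_le_card hsubs
      rw [hcard2] at hle
      have hdeg2 : 2 ≤ degIn (prefixEdges ω (stopIndex 2 ω - 1)) w := by
        unfold degIn; exact hle
      omega
    have main : ∀ a b : Sym2 V, a ≠ b → (EJ G J).filter (fun f => w ∈ f) = {a, b} →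
        a ∉ prefixEdges ω (stopIndex 2 ω - 1) →
        (∃ e, ∃ he : e ∈ EJ G J, ∃ w, w ∈ e ∧
          ((∀ x : {x : Sym2 V // x ∈ G.edgeFinset}, (x : Sym2 V) ∈ EJ G J →
              (x : Sym2 V) ≠ e → (ω.symm x : ℕ) < (ω.symm ⟨e, EJ_subset he⟩ : ℕ)) ∧
            (∀ x : {x : Sym2 V // x ∈ G.edgeFinset}, (x : Sym2 V) ∈ BW G J w →
              (ω.symm ⟨e, EJ_subset he⟩ : ℕ) < (ω.symm x : ℕ)))) := by
      intro a b hab hfab hanot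
      have haf : a ∈ (EJ G J).filter (fun f => w ∈ f) := by
        rw [hfab]; exact Finset.mem_insert_self _ _
      have hbf : b ∈ (EJ G J).filter (fun f => w ∈ f) := by
        rw [hfab]; exact Finset.mem_insert_of_mem (Finset.mem_singleton_self _)
      have haEJ : a ∈ EJ G J := (Finset.mem_filter.1 haf).1
      have hwa : w ∈ a := (Finset.mem_filter.1 haf).2
      have hbEJ : b ∈ EJ G J := (Finset.mem_filter.1 hbf).1
      have hwb : w ∈ b := (Finset.mem_filter.1 hbf).2
      have hpa_lt := hposJ a haEJ
      have hpa_ge : ¬ ((ω.symm ⟨a, EJ_subset haEJ⟩ : Fin G.edgeFinset.card) : ℕ)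
          < stopIndex 2 ω - 1 := by
        intro hlt
        exact hanot ((mem_prefixEdges ω _ a).2 ⟨EJ_subset haEJ, hlt⟩)
      have hpa : ((ω.symm ⟨a, EJ_subset haEJ⟩ : Fin G.edgeFinset.card) : ℕ)
          = stopIndex 2 ω - 1 := by omega
      refine ⟨a, haEJ, w, hwa, ?_, ?_⟩
      · intro x hx hxne
        have hlt := hposJ x.1 hx
        have hxa : ((ω.symm x : Fin G.edgeFinset.card) : ℕ)
            ≠ ((ω.symm ⟨a, EJ_subset haEJ⟩ : Fin G.edgeFinset.card) : ℕ) := by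
          intro hcontra
          have hxx : (⟨(x : Sym2 V), x.2⟩ : {x : Sym2 V // x ∈ G.edgeFinset}) = x :=
            Subtype.coe_eta _ _
          rw [← hxx] at hcontra
          exact hxne (posinj _ _ _ _ hcontra)
        have hxval : ((ω.symm x : Fin G.edgeFinset.card) : ℕ) < stopIndex 2 ω := by
          have hxx : (⟨(x : Sym2 V), x.2⟩ : {x : Sym2 V // x ∈ G.edgeFinset}) = x :=
            Subtype.coe_eta _ _
          rw [← hxx]
          have : ((ω.symm ⟨(x : Sym2 V), EJ_subset hx⟩ : Fin G.edgeFinset.card) : ℕ)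
              < stopIndex 2 ω := hposJ x.1 hx
          convert this using 3
        omega
      · intro x hxB
        by_contra hcon
        push_neg at hcon
        -- pos x ≤ pos a = t - 1
        have hxJ : (x : Sym2 V) ∉ J.edgeSet := by
          unfold BW at hxB
          exact (Finset.mem_filter.1 hxB).2.2
        have hwx : w ∈ (x : Sym2 V) := by
          unfold BW at hxB
          exact (Finset.mem_filter.1 hxB).2.1
        have hxa : (x : Sym2 V) ≠ a := by
          intro hcontra
          exact hxJ (hcontra ▸ (mem_EJ hJG).1 haEJ)
        have hxlt : ((ω.symm x : Fin G.edgeFinset.card) : ℕ) < stopIndex 2 ω - 1 := by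
          have hne2 : ((ω.symm x : Fin G.edgeFinset.card) : ℕ)
              ≠ ((ω.symm ⟨a, EJ_subset haEJ⟩ : Fin G.edgeFinset.card) : ℕ) := by
            intro hcontra
            have hxx : (⟨(x : Sym2 V), x.2⟩ : {x : Sym2 V // x ∈ G.edgeFinset}) = x :=
              Subtype.coe_eta _ _
            rw [← hxx] at hcontra
            exact hxa (posinj _ _ _ _ hcontra)
          omega
        have hxpre : (x : Sym2 V) ∈ prefixEdges ω (stopIndex 2 ω - 1) := by
          rw [mem_prefixEdges]
          refine ⟨x.2, ?_⟩
          have hxx : (⟨(x : Sym2 V), x.2⟩ : {x : Sym2 V // x ∈ G.edgeFinset}) = x :=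
            Subtype.coe_eta _ _
          rw [hxx]
          exact hxlt
        -- b is also in prefix (t-1)
        have hpb_lt := hposJ b hbEJ
        have hpb_ne : ((ω.symm ⟨b, EJ_subset hbEJ⟩ : Fin G.edgeFinset.card) : ℕ)
            ≠ stopIndex 2 ω - 1 := by
          rw [← hpa]
          intro hcontra
          exact hab.symm (posinj _ _ _ _ hcontra)
        have hbpre : b ∈ prefixEdges ω (stopIndex 2 ω - 1) := by
          rw [mem_prefixEdges]
          exact ⟨EJ_subset hbEJ, by omega⟩
        have hxb : (x : Sym2 V) ≠ b := by
          intro hcontra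
          exact hxJ (hcontra ▸ (mem_EJ hJG).1 hbEJ)
        have hsubs : ({(x : Sym2 V), b} : Finset (Sym2 V))
            ⊆ (prefixEdges ω (stopIndex 2 ω - 1)).filter (fun f => w ∈ f) := by
          intro g hg
          rcases Finset.mem_insert.1 hg with rfl | hg
          · exact Finset.mem_filter.2 ⟨hxpre, hwx⟩
          · rw [Finset.mem_singleton.1 hg]
            exact Finset.mem_filter.2 ⟨hbpre, hwb⟩
        have hcard2 : ({(x : Sym2 V), b} : Finset (Sym2 V)).card = 2 := by
          rw [Finset.card_insert_of_notMem (by simpa using hxb), Finset.card_singleton]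
        have hle := Finset.card_le_card hsubs
        rw [hcard2] at hle
        have hdeg2 : 2 ≤ degIn (prefixEdges ω (stopIndex 2 ω - 1)) w := by
          unfold degIn; exact hle
        omega
    by_cases hc1 : f1 ∈ prefixEdges ω (stopIndex 2 ω - 1)
    · have hc2 : f2 ∉ prefixEdges ω (stopIndex 2 ω - 1) := fun hc2 => hbothnot ⟨hc1, hc2⟩
      exact main f2 f1 hne.symm (by rw [hset, Finset.pair_comm]) hc2
    · exact main f1 f2 hne hset hc1
  · -- backward
    rintro ⟨e, he, w, hwe, h1, h2⟩
    have heG := EJ_subset he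
    set pe := ((ω.symm ⟨e, heG⟩ : Fin G.edgeFinset.card) : ℕ) with hpe
    have hposle : ∀ f (hf : f ∈ EJ G J),
        ((ω.symm ⟨f, EJ_subset hf⟩ : Fin G.edgeFinset.card) : ℕ) ≤ pe := by
      intro f hf
      by_cases hfe : f = e
      · subst hfe
        exact le_of_eq rfl
      · have := h1 ⟨f, EJ_subset hf⟩ hf hfe
        exact le_of_lt this
    have hmemS : ∀ v : V, 2 ≤ degIn (prefixEdges ω (pe + 1)) v := by
      intro v
      have hsubs : (EJ G J).filter (fun f => v ∈ f)
          ⊆ (prefixEdges ω (pe + 1)).filter (fun f => v ∈ f) := by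
        intro f hf
        obtain ⟨hfEJ, hvf⟩ := Finset.mem_filter.1 hf
        refine Finset.mem_filter.2 ⟨?_, hvf⟩
        rw [mem_prefixEdges]
        exact ⟨EJ_subset hfEJ, by have := hposle f hfEJ; omega⟩
      have := Finset.card_le_card hsubs
      rw [EJ_filter_card hJG hreg v] at this
      exact this
    -- the other J-edge at w
    obtain ⟨x, y, hxy, hsetw⟩ := Finset.card_eq_two.1 (EJ_filter_card hJG hreg w)
    have hein : e ∈ ({x, y} : Finset (Sym2 V)) := by
      rw [← hsetw]
      exact Finset.mem_filter.2 ⟨he, hwe⟩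
    obtain ⟨f', hf'mem, hf'ne⟩ : ∃ f', f' ∈ (EJ G J).filter (fun f => w ∈ f) ∧ f' ≠ e := by
      rcases Finset.mem_insert.1 hein with rfl | hey
      · exact ⟨y, by rw [hsetw]; exact Finset.mem_insert_of_mem (Finset.mem_singleton_self _),
          fun hc => hxy hc.symm⟩
      · rw [Finset.mem_singleton.1 hey]
        exact ⟨x, by rw [hsetw]; exact Finset.mem_insert_self _ _,
          fun hc => hxy (by rw [hc, ← Finset.mem_singleton.1 hey])⟩
    have hstop : stopIndex 2 ω = pe + 1 := by
      apply le_antisymm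
      · exact Nat.sInf_le hmemS
      · by_contra hcon
        push_neg at hcon
        have hle : stopIndex 2 ω ≤ pe := by omega
        have hinS := htS w
        -- show degIn (prefix (stopIndex)) w ≤ 1
        have hsub1 : (prefixEdges ω (stopIndex 2 ω)).filter (fun f => w ∈ f)
            ⊆ {f'} := by
          intro g hg
          obtain ⟨hgpre, hwg⟩ := Finset.mem_filter.1 hg
          rw [mem_prefixEdges] at hgpre
          obtain ⟨hgG, hglt⟩ := hgpre
          have hglt2 : ((ω.symm ⟨g, hgG⟩ : Fin G.edgeFinset.card) : ℕ) < pe + 1 := by omega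
          have hgne : g ≠ e := by
            intro hcontra
            subst hcontra
            have : ((ω.symm ⟨g, hgG⟩ : Fin G.edgeFinset.card) : ℕ) = pe := by
              rw [hpe]
            omega
          rw [Finset.mem_singleton]
          by_cases hgJ : g ∈ J.edgeSet
          · have hgEJ : g ∈ EJ G J := (mem_EJ hJG).2 hgJ
            have : g ∈ ({x, y} : Finset (Sym2 V)) := by
              rw [← hsetw]
              exact Finset.mem_filter.2 ⟨hgEJ, hwg⟩
            have hge : g ∈ (EJ G J).filter (fun f => w ∈ f) := by
              rw [hsetw]; exact this
            -- g ∈ {e, f'} since filter = {x,y} and e,f' are the two elements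
            -- use: filter has card 2 and contains e and f', g; g ≠ e ⇒ g = f'
            by_contra hgf'
            -- then e, f', g are 3 distinct elements of a 2-element set
            have h3 : ({e, f', g} : Finset (Sym2 V)) ⊆ (EJ G J).filter (fun f => w ∈ f) := by
              intro z hz
              rcases Finset.mem_insert.1 hz with rfl | hz
              · exact Finset.mem_filter.2 ⟨he, hwe⟩
              rcases Finset.mem_insert.1 hz with rfl | hz
              · exact hf'mem
              · rw [Finset.mem_singleton.1 hz]; exact hge
            have hcard3 : ({e, f', g} : Finset (Sym2 V)).card = 3 := by
              rw [Finset.card_insert_of_notMem, Finset.card_insert_of_notMem,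
                Finset.card_singleton]
              · simpa using fun hc => hgf' hc.symm
              · simp only [Finset.mem_insert, Finset.mem_singleton]
                push_neg
                exact ⟨fun hc => hf'ne hc.symm, fun hc => hgne hc.symm⟩
            have := Finset.card_le_card h3
            rw [hcard3, EJ_filter_card hJG hreg w] at this
            omega
          · have hgB : g ∈ BW G J w := by
              unfold BW
              exact Finset.mem_filter.2 ⟨hgG, hwg, hgJ⟩
            have := h2 ⟨g, hgG⟩ hgB
            -- pe < pos g, but pos g < pe + 1
            omega
        have hle1 := Finset.card_le_card hsub1
        rw [Finset.card_singleton] at hle1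
        unfold degIn at hinS
        omega
    intro f hfJ
    have hfEJ : f ∈ EJ G J := (mem_EJ hJG).2 hfJ
    rw [Finset.mem_coe]
    unfold finalEdges
    rw [hstop, mem_prefixEdges]
    exact ⟨EJ_subset hfEJ, by have := hposle f hfEJ; omega⟩

end GraphChar

section PerJ
open scoped Classical
variable {V : Type*} [Fintype V] [DecidableEq V]

/-- the basic ordering condition: all of `EJ` before `e`, all of `Bset` after `e`. -/
abbrev DC (G : SimpleGraph V) [DecidableRel G.Adj] (J : SimpleGraph V)
    (Bset : Finset (Sym2 V)) (e : Sym2 V) (hes : e ∈ G.edgeFinset)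
    (ω : Fin G.edgeFinset.card ≃ {x : Sym2 V // x ∈ G.edgeFinset}) : Prop :=
  (∀ x : {x : Sym2 V // x ∈ G.edgeFinset}, (x : Sym2 V) ∈ EJ G J → (x : Sym2 V) ≠ e →
      (ω.symm x : ℕ) < (ω.symm ⟨e, hes⟩ : ℕ)) ∧
  (∀ x : {x : Sym2 V // x ∈ G.edgeFinset}, (x : Sym2 V) ∈ Bset →
      (ω.symm ⟨e, hes⟩ : ℕ) < (ω.symm x : ℕ))

set_option maxHeartbeats 1000000 in
lemma DC_count (G : SimpleGraph V) [DecidableRel G.Adj] (J : SimpleGraph V) (hJG : J ≤ G)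
    (Bset : Finset (Sym2 V)) (hBs : Bset ⊆ G.edgeFinset)
    (hdisj : Disjoint (EJ G J) Bset) (e : Sym2 V) (he : e ∈ EJ G J) :
    (Finset.univ.filter (fun ω : Fin G.edgeFinset.card ≃ {x : Sym2 V // x ∈ G.edgeFinset} =>
        DC G J Bset e (EJ_subset he) ω)).card
      * ((EJ G J).card + Bset.card).factorial
    = ((EJ G J).card - 1).factorial * Bset.card.factorial
        * G.edgeFinset.card.factorial := by
  exact main_count (s := G.edgeFinset) (EJ G J) Bset EJ_subset hBs hdisj e he

lemma BW_pair_disjoint {G : SimpleGraph V} [DecidableRel G.Adj] {J : SimpleGraph V}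
    (hJG : J ≤ G) {u v : V} (huv : u ≠ v) (he : s(u, v) ∈ EJ G J) :
    Disjoint (BW G J u) (BW G J v) := by
  rw [Finset.disjoint_left]
  intro g hgu hgv
  unfold BW at hgu hgv
  obtain ⟨hgG, hug, hgJ⟩ := Finset.mem_filter.1 hgu
  obtain ⟨_, hvg, _⟩ := Finset.mem_filter.1 hgv
  have : g = s(u, v) := (Sym2.mem_and_mem_iff huv).1 ⟨hug, hvg⟩
  exact hgJ (this ▸ (mem_EJ hJG).1 he)

lemma Eset_card (G : SimpleGraph V) [DecidableRel G.Adj] {d : ℕ}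
    (hG : G.IsRegularOfDegree d) (hd : 2 ≤ d) [Nonempty V]
    (J : SimpleGraph V) (hJG : J ≤ G) (hreg : regOfDegree J 2)
    (e : Sym2 V) (he : e ∈ EJ G J) :
    ((Finset.univ.filter
        (fun ω : Fin G.edgeFinset.card ≃ {x : Sym2 V // x ∈ G.edgeFinset} =>
          ∃ hes : e ∈ G.edgeFinset, ∃ w, w ∈ e ∧ DC G J (BW G J w) e hes ω)).card : ℝ)
    = 2 * (((Fintype.card V - 1).factorial * (d - 2).factorial
          * G.edgeFinset.card.factorial : ℕ) : ℝ)
        / (((Fintype.card V + d - 2).factorial : ℕ) : ℝ)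
      - (((Fintype.card V - 1).factorial * (2 * d - 4).factorial
          * G.edgeFinset.card.factorial : ℕ) : ℝ)
        / (((Fintype.card V + 2 * d - 4).factorial : ℕ) : ℝ) := by
  revert he
  induction e using Sym2.ind with
  | _ u v =>
  intro he
  have hes0 : s(u, v) ∈ G.edgeFinset := EJ_subset he
  have huv : u ≠ v := by
    have := G.not_isDiag_of_mem_edgeSet (SimpleGraph.mem_edgeFinset.1 hes0)
    simpa [Sym2.isDiag_iff_proj_eq] using this
  have hn1 : 1 ≤ Fintype.card V := Fintype.card_pos
  -- rewrite the predicate as a disjunction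
  have hpred : ∀ ω : Fin G.edgeFinset.card ≃ {x : Sym2 V // x ∈ G.edgeFinset},
      (∃ hes : s(u, v) ∈ G.edgeFinset, ∃ w, w ∈ s(u, v) ∧ DC G J (BW G J w) s(u, v) hes ω)
      ↔ (DC G J (BW G J u) s(u, v) (EJ_subset he) ω
          ∨ DC G J (BW G J v) s(u, v) (EJ_subset he) ω) := by
    intro ω
    constructor
    · rintro ⟨hes, w, hw, hD⟩
      rcases Sym2.mem_iff.1 hw with rfl | rfl
      · exact Or.inl hD
      · exact Or.inr hD
    · rintro (hD | hD)
      · exact ⟨EJ_subset he, u, Sym2.mem_mk_left _ _, hD⟩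
      · exact ⟨EJ_subset he, v, Sym2.mem_mk_right _ _, hD⟩
  have hfilt : Finset.univ.filter
      (fun ω : Fin G.edgeFinset.card ≃ {x : Sym2 V // x ∈ G.edgeFinset} =>
        ∃ hes : s(u, v) ∈ G.edgeFinset, ∃ w, w ∈ s(u, v) ∧ DC G J (BW G J w) s(u, v) hes ω)
      = Finset.univ.filter (fun ω => DC G J (BW G J u) s(u, v) (EJ_subset he) ω)
        ∪ Finset.univ.filter (fun ω => DC G J (BW G J v) s(u, v) (EJ_subset he) ω) := by
    rw [← Finset.filter_or]
    apply Finset.filter_congr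
    intro ω _
    exact hpred ω
  have hinter : Finset.univ.filter
      (fun ω : Fin G.edgeFinset.card ≃ {x : Sym2 V // x ∈ G.edgeFinset} =>
        DC G J (BW G J u) s(u, v) (EJ_subset he) ω)
      ∩ Finset.univ.filter (fun ω => DC G J (BW G J v) s(u, v) (EJ_subset he) ω)
      = Finset.univ.filter
        (fun ω => DC G J (BW G J u ∪ BW G J v) s(u, v) (EJ_subset he) ω) := by
    rw [← Finset.filter_and]
    apply Finset.filter_congr
    intro ω _
    unfold DC
    constructor
    · rintro ⟨⟨h1, h2⟩, ⟨_, h4⟩⟩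
      refine ⟨h1, ?_⟩
      intro x hx
      rcases Finset.mem_union.1 hx with hx | hx
      · exact h2 x hx
      · exact h4 x hx
    · rintro ⟨h1, h2⟩
      exact ⟨⟨h1, fun x hx => h2 x (Finset.mem_union_left _ hx)⟩,
        ⟨h1, fun x hx => h2 x (Finset.mem_union_right _ hx)⟩⟩
  -- counts
  have hEJcard := EJ_card hJG hreg
  have hBWu := BW_card hJG hreg hG u
  have hBWv := BW_card hJG hreg hG v
  have hBWdisj := BW_pair_disjoint hJG huv he
  have hcu := DC_count G J hJG (BW G J u) BW_subset (EJ_BW_disjoint hJG) s(u, v) he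
  have hcv := DC_count G J hJG (BW G J v) BW_subset (EJ_BW_disjoint hJG) s(u, v) he
  have hcpair := DC_count G J hJG (BW G J u ∪ BW G J v)
    (Finset.union_subset BW_subset BW_subset)
    (Finset.disjoint_union_right.2 ⟨EJ_BW_disjoint hJG, EJ_BW_disjoint hJG⟩) s(u, v) he
  have hBWunion : (BW G J u ∪ BW G J v).card = 2 * d - 4 := by
    rw [Finset.card_union_of_disjoint hBWdisj, hBWu, hBWv]
    omega
  rw [hEJcard, hBWu] at hcu
  rw [hEJcard, hBWv] at hcv
  rw [hEJcard, hBWunion] at hcpair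
  have harith1 : Fintype.card V + (d - 2) = Fintype.card V + d - 2 := by omega
  have harith2 : Fintype.card V + (2 * d - 4) = Fintype.card V + 2 * d - 4 := by omega
  rw [harith1] at hcu hcv
  rw [harith2] at hcpair
  -- to the reals
  have hfac1 : (0 : ℝ) < (((Fintype.card V + d - 2).factorial : ℕ) : ℝ) := by
    exact_mod_cast Nat.factorial_pos _
  have hfac2 : (0 : ℝ) < (((Fintype.card V + 2 * d - 4).factorial : ℕ) : ℝ) := by
    exact_mod_cast Nat.factorial_pos _
  have hcuR : ((Finset.univ.filter
      (fun ω : Fin G.edgeFinset.card ≃ {x : Sym2 V // x ∈ G.edgeFinset} =>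
        DC G J (BW G J u) s(u, v) (EJ_subset he) ω)).card : ℝ)
      = (((Fintype.card V - 1).factorial * (d - 2).factorial
          * G.edgeFinset.card.factorial : ℕ) : ℝ)
        / (((Fintype.card V + d - 2).factorial : ℕ) : ℝ) := by
    rw [eq_div_iff (ne_of_gt hfac1)]
    exact_mod_cast hcu
  have hcvR : ((Finset.univ.filter
      (fun ω : Fin G.edgeFinset.card ≃ {x : Sym2 V // x ∈ G.edgeFinset} =>
        DC G J (BW G J v) s(u, v) (EJ_subset he) ω)).card : ℝ)
      = (((Fintype.card V - 1).factorial * (d - 2).factorial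
          * G.edgeFinset.card.factorial : ℕ) : ℝ)
        / (((Fintype.card V + d - 2).factorial : ℕ) : ℝ) := by
    rw [eq_div_iff (ne_of_gt hfac1)]
    exact_mod_cast hcv
  have hcpR : ((Finset.univ.filter
      (fun ω : Fin G.edgeFinset.card ≃ {x : Sym2 V // x ∈ G.edgeFinset} =>
        DC G J (BW G J u ∪ BW G J v) s(u, v) (EJ_subset he) ω)).card : ℝ)
      = (((Fintype.card V - 1).factorial * (2 * d - 4).factorial
          * G.edgeFinset.card.factorial : ℕ) : ℝ)
        / (((Fintype.card V + 2 * d - 4).factorial : ℕ) : ℝ) := by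
    rw [eq_div_iff (ne_of_gt hfac2)]
    exact_mod_cast hcpair
  have hucard := Finset.card_union_add_card_inter
    (Finset.univ.filter
      (fun ω : Fin G.edgeFinset.card ≃ {x : Sym2 V // x ∈ G.edgeFinset} =>
        DC G J (BW G J u) s(u, v) (EJ_subset he) ω))
    (Finset.univ.filter (fun ω => DC G J (BW G J v) s(u, v) (EJ_subset he) ω))
  rw [hinter] at hucard
  have hucardR := congrArg (fun x : ℕ => (x : ℝ)) hucard
  push_cast at hucardR
  rw [hfilt]
  rw [hcuR, hcvR, hcpR] at hucardR
  rw [mul_div_assoc]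
  linarith
end PerJ

section PerJ2
open scoped Classical
variable {V : Type*} [Fintype V] [DecidableEq V]

lemma perJ (G : SimpleGraph V) [DecidableRel G.Adj] {d : ℕ}
    (hG : G.IsRegularOfDegree d) (hd : 2 ≤ d) [Nonempty V]
    (J : SimpleGraph V) (hJG : J ≤ G) (hreg : regOfDegree J 2) :
    ((Finset.univ.filter
        (fun ω : Fin G.edgeFinset.card ≃ {e : Sym2 V // e ∈ G.edgeFinset} =>
          J.edgeSet ⊆ ↑(finalEdges 2 ω))).card : ℝ)
    = (G.edgeFinset.card.factorial : ℝ)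
        * (2 / ((Fintype.card V + d - 2).choose (Fintype.card V) : ℝ)
          - 1 / ((Fintype.card V + 2 * d - 4).choose (Fintype.card V) : ℝ)) := by
  have hn1 : 1 ≤ Fintype.card V := Fintype.card_pos
  -- decomposition of the event over the last J-edge
  have hdecomp : Finset.univ.filter
      (fun ω : Fin G.edgeFinset.card ≃ {e : Sym2 V // e ∈ G.edgeFinset} =>
        J.edgeSet ⊆ ↑(finalEdges 2 ω))
      = (EJ G J).biUnion (fun e => Finset.univ.filter
          (fun ω : Fin G.edgeFinset.card ≃ {x : Sym2 V // x ∈ G.edgeFinset} =>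
            ∃ hes : e ∈ G.edgeFinset, ∃ w, w ∈ e ∧ DC G J (BW G J w) e hes ω)) := by
    ext ω
    simp only [Finset.mem_filter, Finset.mem_univ, true_and, Finset.mem_biUnion]
    rw [subset_final_iff G hG hd J hJG hreg ω]
    constructor
    · rintro ⟨e, he, w, hw, hD⟩
      exact ⟨e, he, ⟨EJ_subset he, w, hw, hD⟩⟩
    · rintro ⟨e, he, hes, w, hw, hD⟩
      exact ⟨e, he, w, hw, hD⟩
  have hdisj : ∀ e ∈ EJ G J, ∀ e' ∈ EJ G J, e ≠ e' →
      Disjoint (Finset.univ.filter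
          (fun ω : Fin G.edgeFinset.card ≃ {x : Sym2 V // x ∈ G.edgeFinset} =>
            ∃ hes : e ∈ G.edgeFinset, ∃ w, w ∈ e ∧ DC G J (BW G J w) e hes ω))
        (Finset.univ.filter
          (fun ω => ∃ hes : e' ∈ G.edgeFinset, ∃ w, w ∈ e' ∧ DC G J (BW G J w) e' hes ω)) := by
    intro e he e' he' hee
    rw [Finset.disjoint_left]
    intro ω hω hω'
    simp only [Finset.mem_filter, Finset.mem_univ, true_and] at hω hω'
    obtain ⟨hes, w, hw, hD1, _⟩ := hω
    obtain ⟨hes', w', hw', hD1', _⟩ := hω'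
    have p1 := hD1 ⟨e', hes'⟩ he' hee.symm
    have p2 := hD1' ⟨e, hes⟩ he hee
    omega
  rw [hdecomp, Finset.card_biUnion hdisj]
  rw [Nat.cast_sum]
  rw [Finset.sum_congr rfl (fun e he => Eset_card G hG hd J hJG hreg e he)]
  rw [Finset.sum_const, EJ_card hJG hreg, nsmul_eq_mul]
  -- final algebra
  set n := Fintype.card V with hn
  set m := G.edgeFinset.card with hm
  have hch1 : (n + d - 2).choose n * n.factorial * (d - 2).factorial
      = (n + d - 2).factorial := by
    have h := Nat.choose_mul_factorial_mul_factorial (show n ≤ n + d - 2 by omega)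
    rwa [show n + d - 2 - n = d - 2 by omega] at h
  have hch2 : (n + 2 * d - 4).choose n * n.factorial * (2 * d - 4).factorial
      = (n + 2 * d - 4).factorial := by
    have h := Nat.choose_mul_factorial_mul_factorial (show n ≤ n + 2 * d - 4 by omega)
    rwa [show n + 2 * d - 4 - n = 2 * d - 4 by omega] at h
  have hnf : n * (n - 1).factorial = n.factorial := Nat.mul_factorial_pred (by omega)
  have hnat1 : n * ((n - 1).factorial * (d - 2).factorial * m.factorial)
      * ((n + d - 2).choose n) = m.factorial * (n + d - 2).factorial := by
    calc n * ((n - 1).factorial * (d - 2).factorial * m.factorial) * ((n + d - 2).choose n)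
        = ((n + d - 2).choose n * (n * (n - 1).factorial) * (d - 2).factorial)
          * m.factorial := by ring
      _ = ((n + d - 2).choose n * n.factorial * (d - 2).factorial) * m.factorial := by
          rw [hnf]
      _ = (n + d - 2).factorial * m.factorial := by rw [hch1]
      _ = m.factorial * (n + d - 2).factorial := by ring
  have hnat2 : n * ((n - 1).factorial * (2 * d - 4).factorial * m.factorial)
      * ((n + 2 * d - 4).choose n) = m.factorial * (n + 2 * d - 4).factorial := by
    calc n * ((n - 1).factorial * (2 * d - 4).factorial * m.factorial)
          * ((n + 2 * d - 4).choose n)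
        = ((n + 2 * d - 4).choose n * (n * (n - 1).factorial) * (2 * d - 4).factorial)
          * m.factorial := by ring
      _ = ((n + 2 * d - 4).choose n * n.factorial * (2 * d - 4).factorial) * m.factorial := by
          rw [hnf]
      _ = (n + 2 * d - 4).factorial * m.factorial := by rw [hch2]
      _ = m.factorial * (n + 2 * d - 4).factorial := by ring
  have hD1ne : (((n + d - 2).factorial : ℕ) : ℝ) ≠ 0 := by
    exact_mod_cast (Nat.factorial_pos _).ne'
  have hD2ne : (((n + 2 * d - 4).factorial : ℕ) : ℝ) ≠ 0 := by
    exact_mod_cast (Nat.factorial_pos _).ne'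
  have hC1ne : (((n + d - 2).choose n : ℕ) : ℝ) ≠ 0 := by
    exact_mod_cast (Nat.choose_pos (show n ≤ n + d - 2 by omega)).ne'
  have hC2ne : (((n + 2 * d - 4).choose n : ℕ) : ℝ) ≠ 0 := by
    exact_mod_cast (Nat.choose_pos (show n ≤ n + 2 * d - 4 by omega)).ne'
  have key1 : (n : ℝ) * ((((n - 1).factorial * (d - 2).factorial * m.factorial : ℕ) : ℝ)
      / (((n + d - 2).factorial : ℕ) : ℝ))
      = (m.factorial : ℝ) / (((n + d - 2).choose n : ℕ) : ℝ) := by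
    rw [mul_div_assoc'] at *
    rw [div_eq_div_iff hD1ne hC1ne]
    exact_mod_cast hnat1
  have key2 : (n : ℝ) * ((((n - 1).factorial * (2 * d - 4).factorial * m.factorial : ℕ) : ℝ)
      / (((n + 2 * d - 4).factorial : ℕ) : ℝ))
      = (m.factorial : ℝ) / (((n + 2 * d - 4).choose n : ℕ) : ℝ) := by
    rw [mul_div_assoc'] at *
    rw [div_eq_div_iff hD2ne hC2ne]
    exact_mod_cast hnat2
  have expand : (n : ℝ) *
      (2 * (((n - 1).factorial * (d - 2).factorial * m.factorial : ℕ) : ℝ)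
          / (((n + d - 2).factorial : ℕ) : ℝ)
        - (((n - 1).factorial * (2 * d - 4).factorial * m.factorial : ℕ) : ℝ)
          / (((n + 2 * d - 4).factorial : ℕ) : ℝ))
      = 2 * ((n : ℝ) * ((((n - 1).factorial * (d - 2).factorial * m.factorial : ℕ) : ℝ)
          / (((n + d - 2).factorial : ℕ) : ℝ)))
        - (n : ℝ) * ((((n - 1).factorial * (2 * d - 4).factorial * m.factorial : ℕ) : ℝ)
          / (((n + 2 * d - 4).factorial : ℕ) : ℝ)) := by ring
  rw [expand, key1, key2]
  ring
end PerJ2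

/-- Let `G` be a `d`-regular finite simple graph on `n` vertices, `d ≥ 2`, containing at
least one Hamiltonian cycle (connected 2-regular spanning subgraph).  Form `G_ω` by listing
the edges of `G` in a uniformly random order and stopping as soon as every vertex has
degree at least `2`.  Then the expected fraction of the Hamiltonian cycles of `G` contained
in `G_ω` equals `2/C(n+d−2,n) − 1/C(n+2d−4,n)`. -/
theorem expected_fraction_of_hamiltonian_cycles_regular
    {V : Type*} [Fintype V] [DecidableEq V] (n d : ℕ) (hcard : Fintype.card V = n)
    (hd : 2 ≤ d) (G : SimpleGraph V) [DecidableRel G.Adj] (hG : G.IsRegularOfDegree d)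
    (hex : ∃ J : SimpleGraph V, J ≤ G ∧ J.Connected ∧ regOfDegree J 2) :
    (∑ ω : Fin G.edgeFinset.card ≃ {e : Sym2 V // e ∈ G.edgeFinset},
        (({J : SimpleGraph V | J ≤ G ∧ J.Connected ∧ regOfDegree J 2 ∧
              J.edgeSet ⊆ ↑(finalEdges 2 ω)}.ncard : ℝ) /
          ({J : SimpleGraph V | J ≤ G ∧ J.Connected ∧ regOfDegree J 2}.ncard : ℝ))) /
      (Fintype.card (Fin G.edgeFinset.card ≃ {e : Sym2 V // e ∈ G.edgeFinset}) : ℝ) =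
    2 / ((n + d - 2).choose n : ℝ) - 1 / ((n + 2 * d - 4).choose n : ℝ) := by
  classical
  subst hcard
  obtain ⟨J₀, hJ₀G, hJ₀conn, hJ₀reg⟩ := hex
  haveI : Nonempty V := hJ₀conn.nonempty
  set H := Finset.univ.filter
    (fun J : SimpleGraph V => J ≤ G ∧ J.Connected ∧ regOfDegree J 2) with hH
  have hJ₀H : J₀ ∈ H := by
    rw [hH]; exact Finset.mem_filter.2 ⟨Finset.mem_univ _, hJ₀G, hJ₀conn, hJ₀reg⟩
  have hNcard : ({J : SimpleGraph V | J ≤ G ∧ J.Connected ∧ regOfDegree J 2}).ncard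
      = H.card := by
    rw [Set.ncard_eq_toFinset_card', Set.toFinset_setOf]
  have hNpos : 0 < H.card := Finset.card_pos.2 ⟨J₀, hJ₀H⟩
  have hNω : ∀ ω : Fin G.edgeFinset.card ≃ {e : Sym2 V // e ∈ G.edgeFinset},
      ({J : SimpleGraph V | J ≤ G ∧ J.Connected ∧ regOfDegree J 2 ∧
          J.edgeSet ⊆ ↑(finalEdges 2 ω)}).ncard
      = (H.filter (fun J => J.edgeSet ⊆ ↑(finalEdges 2 ω))).card := by
    intro ω
    rw [Set.ncard_eq_toFinset_card', Set.toFinset_setOf, hH, Finset.filter_filter]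
    apply congrArg Finset.card
    apply Finset.filter_congr
    intro J _
    constructor
    · rintro ⟨a, b, c, dd⟩; exact ⟨⟨a, b, c⟩, dd⟩
    · rintro ⟨⟨a, b, c⟩, dd⟩; exact ⟨a, b, c, dd⟩
  have hM : Fintype.card (Fin G.edgeFinset.card ≃ {e : Sym2 V // e ∈ G.edgeFinset})
      = G.edgeFinset.card.factorial := by
    rw [Fintype.card_equiv (Fintype.equivFinOfCardEq (Fintype.card_coe _)).symm,
      Fintype.card_fin]
  have hswap : ∑ ω : Fin G.edgeFinset.card ≃ {e : Sym2 V // e ∈ G.edgeFinset},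
      (H.filter (fun J => J.edgeSet ⊆ ↑(finalEdges 2 ω))).card
      = ∑ J ∈ H, (Finset.univ.filter
          (fun ω : Fin G.edgeFinset.card ≃ {e : Sym2 V // e ∈ G.edgeFinset} =>
            J.edgeSet ⊆ ↑(finalEdges 2 ω))).card := by
    simp_rw [Finset.card_filter]
    exact Finset.sum_comm
  have hperJ : ∀ J ∈ H, ((Finset.univ.filter
      (fun ω : Fin G.edgeFinset.card ≃ {e : Sym2 V // e ∈ G.edgeFinset} =>
        J.edgeSet ⊆ ↑(finalEdges 2 ω))).card : ℝ)
      = (G.edgeFinset.card.factorial : ℝ)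
        * (2 / ((Fintype.card V + d - 2).choose (Fintype.card V) : ℝ)
          - 1 / ((Fintype.card V + 2 * d - 4).choose (Fintype.card V) : ℝ)) := by
    intro J hJ
    rw [hH] at hJ
    obtain ⟨_, h1, h2, h3⟩ := Finset.mem_filter.1 hJ
    exact perJ G hG hd J h1 h3
  simp_rw [hNω, hNcard]
  rw [← Finset.sum_div]
  have hcast : ∑ ω : Fin G.edgeFinset.card ≃ {e : Sym2 V // e ∈ G.edgeFinset},
      ((H.filter (fun J => J.edgeSet ⊆ ↑(finalEdges 2 ω))).card : ℝ)
      = ((∑ ω : Fin G.edgeFinset.card ≃ {e : Sym2 V // e ∈ G.edgeFinset},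
          (H.filter (fun J => J.edgeSet ⊆ ↑(finalEdges 2 ω))).card : ℕ) : ℝ) := by
    push_cast
    rfl
  rw [hcast, hswap, Nat.cast_sum, Finset.sum_congr rfl hperJ, Finset.sum_const,
    nsmul_eq_mul, hM]
  have hNne : (H.card : ℝ) ≠ 0 := by exact_mod_cast hNpos.ne'
  have hMne : ((G.edgeFinset.card.factorial : ℕ) : ℝ) ≠ 0 := by
    exact_mod_cast (Nat.factorial_pos _).ne'
  field_simp
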